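/- Let A be a self-adjoint operator on a two-dimensional inner product space with eigenvalues μ = λ_max and ν = λ_min. Then for every nonzero vector x, (μ − ρ(x))(ρ(x) − ν) = ‖r(x)‖²/‖x‖², where r(x) = Ax − ρ(x)x. -/

import Mathlib

open scoped RealInnerProductSpace
open Submodule

noncomputable section

variable {H : Type*} [NormedAddCommGroup H] [InnerProductSpace ℝ H]

/-- The Rayleigh quotient of `x` with respect to `A`. -/
def rq (A : H →L[ℝ] H) (x : H) : ℝ := ⟪x, A x⟫ / ⟪x, x⟫

/-- The residual of `x` with respect to `A`. -/
def res (A : H →L[ℝ] H) (x : H) : H := A x - rq A x • x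

/-- The acute angle between two vectors. -/
def ang (x y : H) : ℝ := Real.arccos (|⟪x, y⟫| / (‖x‖ * ‖y‖))

/-- In a two-dimensional space, if `μ ≥ ν` are the eigenvalues of a self-adjoint `A`
(with orthonormal eigenvectors `u₁, u₂`), then for every nonzero `x`:
`(μ − ρ(x))(ρ(x) − ν) = ‖r(x)‖²/‖x‖²`. -/
theorem stmt_4 [FiniteDimensional ℝ H] (hdim : Module.finrank ℝ H = 2)
    (A : H →L[ℝ] H) (hA : IsSelfAdjoint A)
    (μ ν : ℝ) (hμν : ν ≤ μ) (u₁ u₂ : H) (hu₁ : ‖u₁‖ = 1) (hu₂ : ‖u₂‖ = 1)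
    (horth : ⟪u₁, u₂⟫ = 0) (he₁ : A u₁ = μ • u₁) (he₂ : A u₂ = ν • u₂)
    (x : H) (hx : x ≠ 0) :
    (μ - rq A x) * (rq A x - ν) = ‖res A x‖ ^ 2 / ‖x‖ ^ 2 := by
  have h11 : ⟪u₁, u₁⟫ = 1 := by rw [real_inner_self_eq_norm_sq, hu₁]; norm_num
  have h22 : ⟪u₂, u₂⟫ = 1 := by rw [real_inner_self_eq_norm_sq, hu₂]; norm_num
  have h21 : ⟪u₂, u₁⟫ = 0 := by rw [real_inner_comm]; exact horth
  have hon : Orthonormal ℝ ![u₁, u₂] := by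
    rw [orthonormal_iff_ite]
    intro i j
    fin_cases i <;> fin_cases j <;> simp [h11, h22, horth, h21, hu₁, hu₂]
  have hli := hon.linearIndependent
  have hspan : Submodule.span ℝ (Set.range ![u₁, u₂]) = ⊤ :=
    hli.span_eq_top_of_card_eq_finrank (by simp [hdim])
  have hmem : x ∈ Submodule.span ℝ ({u₁, u₂} : Set H) := by
    have hr : Set.range ![u₁, u₂] = {u₁, u₂} := by
      ext y; simp [Fin.exists_fin_two]; tauto
    rw [← hr, hspan]; trivial
  obtain ⟨a, b, hab⟩ := Submodule.mem_span_pair.mp hmem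
  set ρ := rq A x with hρdef
  have hxx : ⟪x, x⟫ = a ^ 2 + b ^ 2 := by
    rw [← hab]
    simp only [inner_add_left, inner_add_right, real_inner_smul_left,
      real_inner_smul_right, h11, h22, horth, h21]
    ring
  have hxn : ‖x‖ ^ 2 = a ^ 2 + b ^ 2 := by rw [← real_inner_self_eq_norm_sq, hxx]
  have hs : (0 : ℝ) < a ^ 2 + b ^ 2 := by
    rw [← hxn]
    have : ‖x‖ ≠ 0 := norm_ne_zero_iff.mpr hx
    positivity
  have hAx : A x = (μ * a) • u₁ + (ν * b) • u₂ := by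
    rw [← hab, map_add, map_smul, map_smul, he₁, he₂, smul_smul, smul_smul,
      mul_comm a μ, mul_comm b ν]
  have hxAx : ⟪x, A x⟫ = μ * a ^ 2 + ν * b ^ 2 := by
    rw [hAx, ← hab]
    simp only [inner_add_left, inner_add_right, real_inner_smul_left,
      real_inner_smul_right, h11, h22, horth, h21]
    ring
  have hρ : ρ = (μ * a ^ 2 + ν * b ^ 2) / (a ^ 2 + b ^ 2) := by
    rw [hρdef, rq, hxAx, hxx]
  have hres : res A x = (μ * a - ρ * a) • u₁ + (ν * b - ρ * b) • u₂ := by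
    rw [res, ← hρdef, hAx]
    conv_lhs => rw [← hab]
    module
  have hrn : ‖res A x‖ ^ 2 = (μ * a - ρ * a) ^ 2 + (ν * b - ρ * b) ^ 2 := by
    rw [← real_inner_self_eq_norm_sq, hres]
    simp only [inner_add_left, inner_add_right, real_inner_smul_left,
      real_inner_smul_right, h11, h22, horth, h21]
    ring
  rw [hrn, hxn, hρ]
  field_simp
  ring
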